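/- (Any equivariant homotopy momentum section induces a weak homotopy momentum section, degree-k component.) Let (A, L, ρ) be a Lie–Rinehart algebra over ℝ with a connection ∇, fix n ≥ 1 and 0 ≤ k ≤ n−1, let ω be an alternating A-multilinear (n+1)-form on Der_ℝ(A), and let Ω^k be the A-module of alternating A-multilinear maps Der_ℝ(A)^k → A with the Lie derivative action L_X. Let μ_k : L^{n−k} → Ω^k be alternating A-multilinear and equivariant, and let ν : L^{n−k+1} → Ω^k be any alternating A-multilinear map (representing ∇μ_{k−1}) such that the homotopy momentum section equation ν(e₁,…,e_{n+1−k}) + (ᴱdμ_k)(e₁,…,e_{n+1−k}) = −(ι_ρ^{n+1−k}ω)(e₁,…,e_{n+1−k}) holds for all e₁,…,e_{n+1−k} ∈ L. Then for all e₁,…,e_{n+1−k} ∈ L with Σ_{i<j} (−1)^{i+j} [e_i,e_j]^∇ ∧ e₁ ∧ … ∧ ê_i ∧ … ∧ ê_j ∧ … ∧ e_{n+1−k} = 0 in the (n−k)-th exterior power of the A-module L (Lie kernel elements), the weak homotopy momentum section equation holds: ν(e₁,…,e_{n+1−k}) = −(ι_ρ^{n+1−k}ω)(e₁,…,e_{n+1−k}).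 -/

import Mathlib

open scoped BigOperators

/-- The tuple obtained from `e : Fin (m+1) → L` by inserting `b` in front and
omitting the entries at positions `i` and `j` (intended for `i < j`). -/
def omit2cons {L : Type*} {m : ℕ} (b : L) (e : Fin (m + 1) → L) (i j : Fin (m + 1)) :
    Fin m → L := fun k =>
  if (k : ℕ) = 0 then b
  else e ⟨if (k : ℕ) - 1 < (i : ℕ) then (k : ℕ) - 1
          else if (k : ℕ) < (j : ℕ) then (k : ℕ) else (k : ℕ) + 1,
        by have := k.isLt; split_ifs <;> omega⟩

/-- The tuple obtained from `f : Fin m → L` by inserting `b` in front and omitting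
the entry at position `i`. -/
def consOmit1 {L : Type*} {m : ℕ} (b : L) (f : Fin m → L) (i : Fin m) : Fin m → L := fun k =>
  if (k : ℕ) = 0 then b
  else f ⟨if (k : ℕ) - 1 < (i : ℕ) then (k : ℕ) - 1 else (k : ℕ),
        by have := k.isLt; split_ifs <;> omega⟩

/-- The induced connection on `A`-valued `m`-forms on `L`:
`(∇_X α)(e₁,…,e_m) = X(α(e₁,…,e_m)) − Σᵢ α(e₁,…,∇_X eᵢ,…,e_m)`. -/
def connForm {A : Type*} [CommRing A] [Algebra ℝ A]
    {L : Type*} [LieRing L] [LieAlgebra ℝ L] [Module A L]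
    (D : Derivation ℝ A A → L → L) {m : ℕ}
    (X : Derivation ℝ A A) (α : (Fin m → L) → A) (f : Fin m → L) : A :=
  X (α f) - ∑ i : Fin m, α (Function.update f i (D X (f i)))

/-- The covariantized bracket `[e₁,e₂]^∇ = ⁅e₁,e₂⁆ − ∇_{ρ(e₁)}e₂ + ∇_{ρ(e₂)}e₁`. -/
def covBracket {A : Type*} [CommRing A] [Algebra ℝ A]
    {L : Type*} [LieRing L] [LieAlgebra ℝ L] [Module A L]
    (ρ : L →ₗ[A] Derivation ℝ A A) (D : Derivation ℝ A A → L → L) (e₁ e₂ : L) : L :=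
  ⁅e₁, e₂⁆ - D (ρ e₁) e₂ + D (ρ e₂) e₁

/-- The Lie derivative of a raw `k`-form on the derivations of `A` along a derivation `X`:
`(L_X β)(X₁,…,X_k) = X(β(X₁,…,X_k)) − Σᵢ β(X₁,…,⁅X,Xᵢ⁆,…,X_k)`. -/
def lieDer {A : Type*} [CommRing A] [Algebra ℝ A] {k : ℕ} (X : Derivation ℝ A A)
    (β : (Fin k → Derivation ℝ A A) → A) (Y : Fin k → Derivation ℝ A A) : A :=
  X (β Y) - ∑ i : Fin k, β (Function.update Y i ⁅X, Y i⁆)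

lemma aux_succAbove_val {p : ℕ} (i : Fin (p + 1)) (l : Fin p) :
    ((i.succAbove l : Fin (p + 1)) : ℕ) = if (l : ℕ) < (i : ℕ) then (l : ℕ) else (l : ℕ) + 1 := by
  rcases lt_or_ge ((l : ℕ)) ((i : ℕ)) with h | h
  · rw [Fin.succAbove_of_castSucc_lt _ _ (by simpa [Fin.lt_iff_val_lt_val] using h), if_pos h]
    simp
  · rw [Fin.succAbove_of_le_castSucc _ _ (by simpa [Fin.le_iff_val_le_val] using h),
      if_neg (not_lt.mpr h)]
    simp

lemma aux_consOmit1_comp_lt {L : Type*} {p : ℕ} (b : L) (e : Fin (p + 1 + 1) → L)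
    (i : Fin (p + 1 + 1)) (l : Fin (p + 1)) (h : (l : ℕ) < (i : ℕ)) :
    consOmit1 b (e ∘ i.succAbove) l = omit2cons b e (Fin.castSucc l) i := by
  funext x
  simp only [consOmit1, omit2cons, Function.comp_apply]
  by_cases hx : (x : ℕ) = 0
  · simp [hx]
  · simp only [hx, if_false]
    apply congrArg e
    apply Fin.ext
    rw [aux_succAbove_val]
    have hxlt := x.isLt
    have hllt := l.isLt
    simp only [Fin.coe_castSucc]
    split_ifs <;> omega

lemma aux_consOmit1_comp_ge {L : Type*} {p : ℕ} (b : L) (e : Fin (p + 1 + 1) → L)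
    (i : Fin (p + 1 + 1)) (l : Fin (p + 1)) (h : (i : ℕ) ≤ (l : ℕ)) :
    consOmit1 b (e ∘ i.succAbove) l = omit2cons b e i (Fin.succ l) := by
  funext x
  simp only [consOmit1, omit2cons, Function.comp_apply]
  by_cases hx : (x : ℕ) = 0
  · simp [hx]
  · simp only [hx, if_false]
    apply congrArg e
    apply Fin.ext
    rw [aux_succAbove_val]
    have hxlt := x.isLt
    have hllt := l.isLt
    simp only [Fin.val_succ]
    split_ifs <;> omega

lemma aux_consOmit1_apply_cycleRange {L : Type*} {q : ℕ} (b : L) (f : Fin (q + 1) → L)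
    (l k : Fin (q + 1)) :
    consOmit1 b f l (l.cycleRange k) = Function.update f l b k := by
  rcases lt_trichotomy k l with h | h | h
  · have h' := Fin.lt_iff_val_lt_val.mp h
    have hv : ((l.cycleRange k : Fin (q + 1)) : ℕ) = (k : ℕ) + 1 := Fin.coe_cycleRange_of_lt h
    simp only [consOmit1, hv]
    rw [if_neg (by omega), Function.update_of_ne (ne_of_lt h)]
    apply congrArg f
    apply Fin.ext
    simp only []
    rw [if_pos (by omega)]
    omega
  · subst h
    simp [consOmit1]
  · have h' := Fin.lt_iff_val_lt_val.mp h
    rw [Fin.cycleRange_of_gt h, Function.update_of_ne (ne_of_gt h)]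
    simp only [consOmit1]
    rw [if_neg (by omega)]
    apply congrArg f
    apply Fin.ext
    simp only []
    rw [if_neg (by omega)]

lemma aux_consOmit1_eq_comp {L : Type*} {q : ℕ} (b : L) (f : Fin (q + 1) → L)
    (l : Fin (q + 1)) :
    consOmit1 b f l = (Function.update f l b) ∘ ⇑(l.cycleRange)⁻¹ := by
  funext x
  have h := aux_consOmit1_apply_cycleRange b f l ((l.cycleRange)⁻¹ x)
  simpa using h

section modhelpers

variable {A : Type*} [CommRing A] {L : Type*} [AddCommGroup L] [Module A L]
  {N : Type*} [AddCommGroup N] [Module A N]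

lemma aux_consOmit1_update0 {q : ℕ} (b c : L) (f : Fin (q + 1) → L) (l : Fin (q + 1)) :
    consOmit1 b f l = Function.update (consOmit1 c f l) 0 b := by
  funext x
  by_cases hx : x = (0 : Fin (q + 1))
  · subst hx
    simp [consOmit1, Function.update_self]
  · rw [Function.update_of_ne hx]
    have hx' : (x : ℕ) ≠ 0 := fun hh => hx (Fin.ext hh)
    simp [consOmit1, hx']

lemma aux_omit2cons_update0 {q : ℕ} (b c : L) (e : Fin (q + 1 + 1) → L)
    (i j : Fin (q + 1 + 1)) :
    omit2cons b e i j = Function.update (omit2cons c e i j) 0 b := by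
  funext x
  by_cases hx : x = (0 : Fin (q + 1))
  · subst hx
    simp [omit2cons, Function.update_self]
  · rw [Function.update_of_ne hx]
    have hx' : (x : ℕ) ≠ 0 := fun hh => hx (Fin.ext hh)
    simp [omit2cons, hx']

lemma aux_map_consOmit1_add {q : ℕ} (μ : AlternatingMap A L N (Fin (q + 1)))
    (b c : L) (f : Fin (q + 1) → L) (l : Fin (q + 1)) :
    μ (consOmit1 (b + c) f l) = μ (consOmit1 b f l) + μ (consOmit1 c f l) := by
  have h := μ.map_update_add (consOmit1 (0 : L) f l) 0 b c
  rwa [← aux_consOmit1_update0 (b + c) 0 f l, ← aux_consOmit1_update0 b 0 f l,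
    ← aux_consOmit1_update0 c 0 f l] at h

lemma aux_map_omit2cons_add {q : ℕ} (μ : AlternatingMap A L N (Fin (q + 1)))
    (b c : L) (e : Fin (q + 1 + 1) → L) (i j : Fin (q + 1 + 1)) :
    μ (omit2cons (b + c) e i j) = μ (omit2cons b e i j) + μ (omit2cons c e i j) := by
  have h := μ.map_update_add (omit2cons (0 : L) e i j) 0 b c
  rwa [← aux_omit2cons_update0 (b + c) 0 e i j, ← aux_omit2cons_update0 b 0 e i j,
    ← aux_omit2cons_update0 c 0 e i j] at h

lemma aux_map_omit2cons_sub {q : ℕ} (μ : AlternatingMap A L N (Fin (q + 1)))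
    (b c : L) (e : Fin (q + 1 + 1) → L) (i j : Fin (q + 1 + 1)) :
    μ (omit2cons (b - c) e i j) = μ (omit2cons b e i j) - μ (omit2cons c e i j) := by
  have h := μ.map_update_sub (omit2cons (0 : L) e i j) 0 b c
  rwa [← aux_omit2cons_update0 (b - c) 0 e i j, ← aux_omit2cons_update0 b 0 e i j,
    ← aux_omit2cons_update0 c 0 e i j] at h

lemma aux_map_update_eq_smul_consOmit1 {q : ℕ} (μ : AlternatingMap A L N (Fin (q + 1)))
    (b : L) (f : Fin (q + 1) → L) (l : Fin (q + 1)) :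
    μ (Function.update f l b) = ((-1 : ℤ) ^ (l : ℕ)) • μ (consOmit1 b f l) := by
  have h : μ (consOmit1 b f l) = ((-1 : ℤ) ^ (l : ℕ)) • μ (Function.update f l b) := by
    rw [aux_consOmit1_eq_comp, AlternatingMap.map_perm, Equiv.Perm.sign_inv,
      Fin.sign_cycleRange, Units.smul_def]
    norm_num
  rw [h, smul_smul, ← pow_add, Even.neg_one_pow ⟨(l : ℕ), rfl⟩, one_smul]

end modhelpers

lemma aux_sum_pairs {M : Type*} [AddCommGroup M] {p : ℕ} (g : Fin (p + 1) → Fin (p + 1) → M) :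
    ∑ i : Fin (p + 1), ∑ l : Fin p, g i (i.succAbove l)
      = ∑ i : Fin (p + 1), ∑ j : Fin (p + 1), if i < j then g i j + g j i else 0 := by
  have h1 : ∀ i : Fin (p + 1), ∑ l : Fin p, g i (i.succAbove l) = (∑ j, g i j) - g i i := by
    intro i
    rw [Fin.sum_univ_succAbove (fun j => g i j) i]
    abel
  calc ∑ i : Fin (p + 1), ∑ l : Fin p, g i (i.succAbove l)
      = ∑ i : Fin (p + 1), ((∑ j, g i j) - g i i) := Finset.sum_congr rfl fun i _ => h1 i
    _ = ∑ i : Fin (p + 1), ∑ j : Fin (p + 1), (g i j - if i = j then g i j else 0) := by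
        refine Finset.sum_congr rfl fun i _ => ?_
        rw [Finset.sum_sub_distrib, Finset.sum_ite_eq, if_pos (Finset.mem_univ i)]
    _ = ∑ i : Fin (p + 1), ∑ j : Fin (p + 1),
          ((if i < j then g i j else 0) + (if j < i then g i j else 0)) := by
        refine Finset.sum_congr rfl fun i _ => Finset.sum_congr rfl fun j _ => ?_
        rcases lt_trichotomy i j with h | h | h
        · simp [h, h.ne, h.asymm]
        · subst h
          simp
        · simp [h, h.ne', h.asymm]
    _ = (∑ i : Fin (p + 1), ∑ j : Fin (p + 1), if i < j then g i j else 0)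
          + ∑ i : Fin (p + 1), ∑ j : Fin (p + 1), if j < i then g i j else 0 := by
        rw [← Finset.sum_add_distrib]
        exact Finset.sum_congr rfl fun i _ => Finset.sum_add_distrib
    _ = (∑ i : Fin (p + 1), ∑ j : Fin (p + 1), if i < j then g i j else 0)
          + ∑ j : Fin (p + 1), ∑ i : Fin (p + 1), if j < i then g i j else 0 := by
        congr 1
        exact Finset.sum_comm
    _ = ∑ i : Fin (p + 1), ∑ j : Fin (p + 1), if i < j then g i j + g j i else 0 := by
        rw [← Finset.sum_add_distrib]
        refine Finset.sum_congr rfl fun i _ => ?_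
        rw [← Finset.sum_add_distrib]
        refine Finset.sum_congr rfl fun j _ => ?_
        split_ifs with h
        · rfl
        · exact add_zero 0

/-- (Any equivariant homotopy momentum section induces a weak homotopy
momentum section, degree-`k` component.) Here `n = p + k` with `p = n − k ≥ 1`, so
`0 ≤ k ≤ n − 1`; `μ_k : L^{n−k} → Ω^k` is alternating `A`-multilinear and equivariant,
`ν : L^{n−k+1} → Ω^k` represents `∇μ_{k−1}`, and `ω` is an `(n+1) = (p+1)+k` form on
`Der_ℝ(A)`. If the homotopy momentum section equation
`ν(e₁,…) + (ᴱdμ_k)(e₁,…) = −(ι_ρ^{n+1−k}ω)(e₁,…)` holds, then on Lie-kernel elements the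
weak homotopy momentum section equation `ν(e₁,…) = −(ι_ρ^{n+1−k}ω)(e₁,…)` holds. -/
theorem weak_homotopy_momentum_section_of_equivariant
    {A : Type*} [CommRing A] [Algebra ℝ A]
    {L : Type*} [LieRing L] [LieAlgebra ℝ L] [Module A L]
    (ρ : L →ₗ[A] Derivation ℝ A A)
    (hanchor : ∀ e₁ e₂ : L, ρ ⁅e₁, e₂⁆ = ⁅ρ e₁, ρ e₂⁆)
    (hleibniz : ∀ (a : A) (e₁ e₂ : L), ⁅e₁, a • e₂⁆ = a • ⁅e₁, e₂⁆ + ρ e₁ a • e₂)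
    (D : Derivation ℝ A A → L → L)
    (hDaddX : ∀ (X Y : Derivation ℝ A A) (e : L), D (X + Y) e = D X e + D Y e)
    (hDsmulX : ∀ (a : A) (X : Derivation ℝ A A) (e : L), D (a • X) e = a • D X e)
    (hDadd : ∀ (X : Derivation ℝ A A) (e₁ e₂ : L), D X (e₁ + e₂) = D X e₁ + D X e₂)
    (hDsmulR : ∀ (X : Derivation ℝ A A) (r : ℝ) (e : L), D X (r • e) = r • D X e)
    (hDleibniz : ∀ (X : Derivation ℝ A A) (a : A) (e : L), D X (a • e) = a • D X e + X a • e)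
    {p k : ℕ} (hp : 1 ≤ p)
    (ω : AlternatingMap A (Derivation ℝ A A) A (Fin (p + 1 + k)))
    (μk : AlternatingMap A L (AlternatingMap A (Derivation ℝ A A) A (Fin k)) (Fin p))
    (ν : AlternatingMap A L (AlternatingMap A (Derivation ℝ A A) A (Fin k)) (Fin (p + 1)))
    (hequiv : ∀ (e : L) (f : Fin p → L) (Y : Fin k → Derivation ℝ A A),
      lieDer (ρ e) ⇑(μk f) Y
          - ∑ i : Fin p, (μk (Function.update f i (D (ρ e) (f i)))) Y
        = ∑ i : Fin p,
            (-1 : ℤ) ^ (i : ℕ) • (μk (consOmit1 (covBracket ρ D e (f i)) f i)) Y)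
    (hms : ∀ (e : Fin (p + 1) → L) (Y : Fin k → Derivation ℝ A A),
      (ν e) Y
          + ((∑ i : Fin (p + 1),
              (-1 : ℤ) ^ (i : ℕ) • lieDer (ρ (e i)) ⇑(μk (e ∘ i.succAbove)) Y)
            + ∑ i : Fin (p + 1), ∑ j : Fin (p + 1),
                if i < j then
                  (-1 : ℤ) ^ ((i : ℕ) + (j : ℕ)) • (μk (omit2cons ⁅e i, e j⁆ e i j)) Y
                else 0)
        = - ω (Fin.append (fun i : Fin (p + 1) => ρ (e i.rev)) Y)) :
    ∀ e : Fin (p + 1) → L,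
      (∑ i : Fin (p + 1), ∑ j : Fin (p + 1),
          if i < j then
            (-1 : ℤ) ^ ((i : ℕ) + (j : ℕ)) •
              ExteriorAlgebra.ιMulti A p (omit2cons (covBracket ρ D (e i) (e j)) e i j)
          else 0) = 0 →
      ∀ Y : Fin k → Derivation ℝ A A,
        (ν e) Y = - ω (Fin.append (fun i : Fin (p + 1) => ρ (e i.rev)) Y) := by
  obtain ⟨q, rfl⟩ : ∃ q, p = q + 1 := ⟨p - 1, by omega⟩
  intro e hker Y
  classical
  -- evaluation-at-Y linear map
  let evY : AlternatingMap A (Derivation ℝ A A) A (Fin k) →ₗ[A] A :=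
    { toFun := fun g => g Y
      map_add' := fun _ _ => rfl
      map_smul' := fun _ _ => rfl }
  let F : AlternatingMap A L A (Fin (q + 1)) := evY.compAlternatingMap μk
  let Φ : ExteriorAlgebra A L →ₗ[A] A :=
    ExteriorAlgebra.liftAlternating
      (Function.update (fun i => (0 : AlternatingMap A L A (Fin i))) (q + 1) F)
  have hΦ : ∀ v : Fin (q + 1) → L, Φ (ExteriorAlgebra.ιMulti A (q + 1) v) = (μk v) Y := by
    intro v
    simp only [Φ, ExteriorAlgebra.liftAlternating_apply_ιMulti, Function.update_self]
    rfl
  have hker0 : (∑ i : Fin (q + 1 + 1), ∑ j : Fin (q + 1 + 1), if i < j then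
      (-1 : ℤ) ^ ((i : ℕ) + (j : ℕ)) • (μk (omit2cons (covBracket ρ D (e i) (e j)) e i j)) Y
      else 0) = 0 := by
    have h0 := congrArg Φ hker
    rw [map_zero, map_sum] at h0
    refine Eq.trans ?_ h0
    refine Finset.sum_congr rfl fun i _ => ?_
    rw [map_sum]
    refine Finset.sum_congr rfl fun j _ => ?_
    split_ifs with hij
    · rw [map_zsmul, hΦ]
    · exact (map_zero Φ).symm
  -- expansion of the Lie derivative term via equivariance
  have hlie : ∀ i : Fin (q + 1 + 1),
      lieDer (ρ (e i)) ⇑(μk (e ∘ i.succAbove)) Y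
        = ∑ l : Fin (q + 1), (-1 : ℤ) ^ (l : ℕ) •
            (μk (consOmit1
              (⁅e i, e (i.succAbove l)⁆ + D (ρ (e (i.succAbove l))) (e i))
              (e ∘ i.succAbove) l)) Y := by
    intro i
    have h := hequiv (e i) (e ∘ i.succAbove) Y
    rw [sub_eq_iff_eq_add] at h
    rw [h, ← Finset.sum_add_distrib]
    refine Finset.sum_congr rfl fun l _ => ?_
    have hb : covBracket ρ D (e i) ((e ∘ i.succAbove) l) + D (ρ (e i)) ((e ∘ i.succAbove) l)
        = ⁅e i, e (i.succAbove l)⁆ + D (ρ (e (i.succAbove l))) (e i) := by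
      simp only [covBracket, Function.comp_apply]
      abel
    rw [aux_map_update_eq_smul_consOmit1 μk (D (ρ (e i)) ((e ∘ i.succAbove) l))
        (e ∘ i.succAbove) l,
      AlternatingMap.smul_apply, ← smul_add, ← AlternatingMap.add_apply,
      ← aux_map_consOmit1_add μk _ _ _ l, hb]
  -- the key vanishing
  have key : (∑ i : Fin (q + 1 + 1),
        (-1 : ℤ) ^ (i : ℕ) • lieDer (ρ (e i)) ⇑(μk (e ∘ i.succAbove)) Y)
      + (∑ i : Fin (q + 1 + 1), ∑ j : Fin (q + 1 + 1), if i < j then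
          (-1 : ℤ) ^ ((i : ℕ) + (j : ℕ)) • (μk (omit2cons ⁅e i, e j⁆ e i j)) Y else 0)
      = 0 := by
    set g : Fin (q + 1 + 1) → Fin (q + 1 + 1) → A := fun i j =>
      if (j : ℕ) < (i : ℕ) then
        (-1 : ℤ) ^ ((i : ℕ) + (j : ℕ)) •
          (μk (omit2cons (⁅e i, e j⁆ + D (ρ (e j)) (e i)) e j i)) Y
      else (-((-1 : ℤ) ^ ((i : ℕ) + (j : ℕ)))) •
          (μk (omit2cons (⁅e i, e j⁆ + D (ρ (e j)) (e i)) e i j)) Y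
      with hgdef
    have hS1 : (∑ i : Fin (q + 1 + 1),
          (-1 : ℤ) ^ (i : ℕ) • lieDer (ρ (e i)) ⇑(μk (e ∘ i.succAbove)) Y)
        = ∑ i : Fin (q + 1 + 1), ∑ l : Fin (q + 1), g i (i.succAbove l) := by
      refine Finset.sum_congr rfl fun i _ => ?_
      rw [hlie i, Finset.smul_sum]
      refine Finset.sum_congr rfl fun l _ => ?_
      rw [smul_smul, ← pow_add]
      rcases lt_or_ge ((l : ℕ)) ((i : ℕ)) with h | h
      · have hsa : i.succAbove l = Fin.castSucc l :=
          Fin.succAbove_of_castSucc_lt _ _ (by simpa [Fin.lt_iff_val_lt_val] using h)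
        rw [aux_consOmit1_comp_lt _ _ _ _ h]
        simp only [hsa, hgdef, Fin.coe_castSucc]
        rw [if_pos h]
      · have hsa : i.succAbove l = Fin.succ l :=
          Fin.succAbove_of_le_castSucc _ _ (by simpa [Fin.le_iff_val_le_val] using h)
        rw [aux_consOmit1_comp_ge _ _ _ _ h]
        simp only [hsa, hgdef, Fin.val_succ]
        rw [if_neg (by omega)]
        congr 1
        rw [show ((i : ℕ) + ((l : ℕ) + 1)) = ((i : ℕ) + (l : ℕ)) + 1 from by omega, pow_succ]
        ring
    rw [hS1, aux_sum_pairs, ← Finset.sum_add_distrib]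
    have hterm : ∀ i j : Fin (q + 1 + 1), (if i < j then g i j + g j i else 0)
        + (if i < j then
            (-1 : ℤ) ^ ((i : ℕ) + (j : ℕ)) • (μk (omit2cons ⁅e i, e j⁆ e i j)) Y else 0)
        = if i < j then
            (-((-1 : ℤ) ^ ((i : ℕ) + (j : ℕ)))) •
              (μk (omit2cons (covBracket ρ D (e i) (e j)) e i j)) Y else 0 := by
      intro i j
      split_ifs with hij
      · have hij' := Fin.lt_iff_val_lt_val.mp hij
        simp only [hgdef]
        rw [if_neg (by omega), if_pos hij']
        have harg : (⁅e i, e j⁆ + D (ρ (e j)) (e i)) - (⁅e j, e i⁆ + D (ρ (e i)) (e j))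
            = ⁅e i, e j⁆ + covBracket ρ D (e i) (e j) := by
          rw [covBracket, ← lie_skew (e i) (e j)]
          abel
        have hT : (μk (omit2cons (⁅e i, e j⁆ + D (ρ (e j)) (e i)) e i j)) Y
            - (μk (omit2cons (⁅e j, e i⁆ + D (ρ (e i)) (e j)) e i j)) Y
            = (μk (omit2cons ⁅e i, e j⁆ e i j)) Y
              + (μk (omit2cons (covBracket ρ D (e i) (e j)) e i j)) Y := by
          rw [← AlternatingMap.sub_apply, ← aux_map_omit2cons_sub, harg,
            aux_map_omit2cons_add, AlternatingMap.add_apply]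
        have hcomm : ((j : ℕ) + (i : ℕ)) = ((i : ℕ) + (j : ℕ)) := Nat.add_comm _ _
        rw [hcomm]
        set z : ℤ := (-1 : ℤ) ^ ((i : ℕ) + (j : ℕ)) with hz
        set T1 : A := (μk (omit2cons (⁅e i, e j⁆ + D (ρ (e j)) (e i)) e i j)) Y with hT1
        set T2 : A := (μk (omit2cons (⁅e j, e i⁆ + D (ρ (e i)) (e j)) e i j)) Y with hT2
        set Tb : A := (μk (omit2cons ⁅e i, e j⁆ e i j)) Y with hTb
        set Tc : A := (μk (omit2cons (covBracket ρ D (e i) (e j)) e i j)) Y with hTc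
        have hT1' : T1 = T2 + (Tb + Tc) := by rw [← hT]; ring
        rw [hT1', neg_smul, neg_smul, smul_add, smul_add]
        abel
      · exact add_zero 0
    have hmerge : ∀ i : Fin (q + 1 + 1),
        (∑ j : Fin (q + 1 + 1), if i < j then g i j + g j i else 0)
          + (∑ j : Fin (q + 1 + 1), if i < j then
              (-1 : ℤ) ^ ((i : ℕ) + (j : ℕ)) • (μk (omit2cons ⁅e i, e j⁆ e i j)) Y else 0)
        = ∑ j : Fin (q + 1 + 1), if i < j then
            (-((-1 : ℤ) ^ ((i : ℕ) + (j : ℕ)))) •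
              (μk (omit2cons (covBracket ρ D (e i) (e j)) e i j)) Y else 0 := by
      intro i
      rw [← Finset.sum_add_distrib]
      exact Finset.sum_congr rfl fun j _ => hterm i j
    rw [Finset.sum_congr rfl fun i _ => hmerge i]
    have hneg : ∀ i j : Fin (q + 1 + 1),
        (if i < j then (-((-1 : ℤ) ^ ((i : ℕ) + (j : ℕ)))) •
            (μk (omit2cons (covBracket ρ D (e i) (e j)) e i j)) Y else 0)
        = -(if i < j then ((-1 : ℤ) ^ ((i : ℕ) + (j : ℕ))) •
            (μk (omit2cons (covBracket ρ D (e i) (e j)) e i j)) Y else 0) := by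
      intro i j
      split_ifs
      · rw [neg_smul]
      · rw [neg_zero]
    rw [Finset.sum_congr rfl fun i _ => Finset.sum_congr rfl fun j _ => hneg i j,
      Finset.sum_congr rfl fun i _ => Finset.sum_neg_distrib _,
      Finset.sum_neg_distrib, hker0, neg_zero]
  have hms' := hms e Y
  rw [key, add_zero] at hms'
  exact hms'
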